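/- Let E = max_{u ∈ V} |π(u,v) - s(u)| where s satisfies the perturbed recurrence with residuals p(w) satisfying 0 ≤ p(w) < δ. Then E satisfies E ≤ (1-α)E + (1-α)δ, and hence E ≤ ((1-α)/α)·δ. -/

import Mathlib

/-- Let `E = max_u |π(u,v) - s(u)|` where `s` satisfies the perturbed
recurrence with residuals `0 ≤ p(w) < δ`. Then `E ≤ (1-α)·E + (1-α)·δ`, and hence
`E ≤ ((1-α)/α)·δ`. -/
theorem error_contraction_bound
    {V : Type*} [Fintype V] [Nonempty V] [DecidableEq V]
    (out : V → Finset V) (hout : ∀ u, (out u).Nonempty)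
    (α : ℝ) (hα : 0 < α) (hα1 : α < 1)
    (δ : ℝ) (hδ : 0 < δ)
    (v : V) (π : V → V → ℝ) (s p : V → ℝ)
    (hπ : ∀ u, π u v =
      (1 - α) * (((out u).card : ℝ)⁻¹ * ∑ w ∈ out u, π w v)
        + (if u = v then α else 0))
    (hs : ∀ u, s u =
      (1 - α) * (((out u).card : ℝ)⁻¹ * ∑ w ∈ out u, (s w - p w))
        + (if u = v then α else 0))
    (hp : ∀ w, 0 ≤ p w ∧ p w < δ)
    (E : ℝ)
    (hE : E = Finset.univ.sup' Finset.univ_nonempty (fun u => |π u v - s u|)) :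
    E ≤ (1 - α) * E + (1 - α) * δ ∧ E ≤ ((1 - α) / α) * δ := by
  have hEbd : ∀ w, |π w v - s w| ≤ E := by
    intro w
    rw [hE]
    exact Finset.le_sup' (fun u => |π u v - s u|) (Finset.mem_univ w)
  have key : E ≤ (1 - α) * E + (1 - α) * δ := by
    conv_lhs => rw [hE]
    apply Finset.sup'_le
    intro u _
    have hcard : (0 : ℝ) < ((out u).card : ℝ) := by
      exact_mod_cast Finset.card_pos.mpr (hout u)
    have hdiff : π u v - s u =
        (1 - α) * (((out u).card : ℝ)⁻¹ * ∑ w ∈ out u, (π w v - s w + p w)) := by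
      rw [hπ u, hs u]
      have : ∑ w ∈ out u, (π w v - s w + p w)
          = (∑ w ∈ out u, π w v) - ∑ w ∈ out u, (s w - p w) := by
        rw [Finset.sum_add_distrib, Finset.sum_sub_distrib, Finset.sum_sub_distrib]
        ring
      rw [this]; ring
    rw [hdiff, abs_mul, abs_mul]
    have h1α : (0:ℝ) ≤ 1 - α := by linarith
    rw [abs_of_nonneg h1α, abs_of_nonneg (inv_nonneg.mpr hcard.le)]
    have hsum : |∑ w ∈ out u, (π w v - s w + p w)| ≤ ((out u).card : ℝ) * (E + δ) := by
      calc |∑ w ∈ out u, (π w v - s w + p w)|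
          ≤ ∑ w ∈ out u, |π w v - s w + p w| := Finset.abs_sum_le_sum_abs _ _
        _ ≤ ∑ w ∈ out u, (E + δ) := by
            apply Finset.sum_le_sum
            intro w _
            have := hEbd w
            have h1 := (hp w).1
            have h2 := (hp w).2
            have habs : |p w| ≤ δ := by rw [abs_of_nonneg h1]; linarith
            calc |π w v - s w + p w| ≤ |π w v - s w| + |p w| := abs_add_le _ _
              _ ≤ E + δ := add_le_add this habs
        _ = ((out u).card : ℝ) * (E + δ) := by
            rw [Finset.sum_const, nsmul_eq_mul]
    calc (1 - α) * (((out u).card : ℝ)⁻¹ * |∑ w ∈ out u, (π w v - s w + p w)|)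
        ≤ (1 - α) * (((out u).card : ℝ)⁻¹ * (((out u).card : ℝ) * (E + δ))) := by
          apply mul_le_mul_of_nonneg_left _ h1α
          exact mul_le_mul_of_nonneg_left hsum (inv_nonneg.mpr hcard.le)
      _ = (1 - α) * (E + δ) := by rw [inv_mul_cancel_left₀ hcard.ne']
      _ = (1 - α) * E + (1 - α) * δ := by ring
  refine ⟨key, ?_⟩
  have : α * E ≤ (1 - α) * δ := by linarith
  rw [div_mul_eq_mul_div, le_div_iff₀ hα]
  linarith [this]
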